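/- Every noncrossing tree on n ≥ 2 vertices contains at least one primary edge. -/

import Mathlib

/-- No two edges cross when the vertices are placed in increasing clockwise order. -/
def Noncrossing {n : ℕ} (G : SimpleGraph (Fin n)) : Prop :=
  ∀ i j k l : Fin n, i < j → j < k → k < l → G.Adj i k → ¬ G.Adj j l

/-- An edge `{i,j}` with `i < j` is primary iff `i` has no edge to any vertex in
`{j+1,…,n,1,…,i-1}` (i.e. to any `k` with `k < i` or `j < k`) and `j` has no edge
to any vertex in `{i+1,…,j-1}`. -/
def IsPrimaryEdge {n : ℕ} (G : SimpleGraph (Fin n)) (i j : Fin n) : Prop :=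
  i < j ∧ G.Adj i j ∧ (∀ k : Fin n, (k < i ∨ j < k) → ¬ G.Adj i k) ∧
    (∀ k : Fin n, i < k → k < j → ¬ G.Adj j k)

/-- Every noncrossing tree on `n ≥ 2` vertices contains at least one primary edge. -/
theorem exists_primary_edge (n : ℕ) (hn : 2 ≤ n) (G : SimpleGraph (Fin n))
    (hT : G.IsTree) (hNC : Noncrossing G) :
    ∃ i j : Fin n, IsPrimaryEdge G i j := by
  classical
  have hnt : Nontrivial (Fin n) := Fin.nontrivial_iff_two_le.mpr hn
  -- every vertex has a neighbor
  have hnbr : ∀ v : Fin n, ∃ w, G.Adj v w := by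
    intro v
    obtain ⟨u, hu⟩ := exists_ne v
    obtain ⟨p⟩ := hT.isConnected.preconnected v u
    cases p with
    | nil => exact absurd rfl hu
    | cons h _ => exact ⟨_, h⟩
  -- the set of vertices all of whose neighbors are larger
  set S : Finset (Fin n) := Finset.univ.filter (fun v => ∀ w, G.Adj v w → v < w) with hS
  have h0S : (⟨0, by omega⟩ : Fin n) ∈ S := by
    simp only [hS, Finset.mem_filter, Finset.mem_univ, true_and]
    intro w hw
    exact lt_of_le_of_ne (by simp [Fin.le_def]) hw.ne
  have hSne : S.Nonempty := ⟨_, h0S⟩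
  set i : Fin n := S.max' hSne with hi
  have hiS : ∀ w, G.Adj i w → i < w := by
    have := S.max'_mem hSne
    simp only [hS, Finset.mem_filter] at this
    exact this.2
  -- every vertex above i has a neighbor below it
  have hdesc : ∀ v : Fin n, i < v → ∃ w, G.Adj v w ∧ w < v := by
    intro v hv
    by_contra hcon
    push_neg at hcon
    have hvS : v ∈ S := by
      simp only [hS, Finset.mem_filter, Finset.mem_univ, true_and]
      intro w hw
      exact lt_of_le_of_ne (hcon w hw) hw.ne
    exact absurd (S.le_max' v hvS) (not_le.mpr hv)
  -- j = max neighbor of i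
  set N : Finset (Fin n) := Finset.univ.filter (fun w => G.Adj i w) with hN
  have hNne : N.Nonempty := by
    obtain ⟨w, hw⟩ := hnbr i
    exact ⟨w, by simp [hN, hw]⟩
  set j : Fin n := N.max' hNne with hj
  have hij : G.Adj i j := by
    have := N.max'_mem hNne
    simpa [hN] using this
  have hiltj : i < j := hiS j hij
  have hjmax : ∀ w, G.Adj i w → w ≤ j := by
    intro w hw
    exact N.le_max' w (by simp [hN, hw])
  -- the deleted graph
  set G' : SimpleGraph (Fin n) := G \ SimpleGraph.fromEdgeSet {s(i, j)} with hG'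
  have hG'adj : ∀ a b : Fin n, G.Adj a b → s(a, b) ≠ s(i, j) → G'.Adj a b := by
    intro a b hab hne'
    simp only [hG', SimpleGraph.sdiff_adj, SimpleGraph.fromEdgeSet_adj, Set.mem_singleton_iff]
    exact ⟨hab, fun h => hne' h.1⟩
  -- key lemma: every vertex in (i,j) reaches i in G'
  have key : ∀ M : ℕ, ∀ v : Fin n, v.val = M → i < v → v < j → G'.Reachable v i := by
    intro M
    induction M using Nat.strong_induction_on with
    | _ M ih =>
      intro v hv hiv hvj
      obtain ⟨w, hw, hwv⟩ := hdesc v hiv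
      rcases lt_trichotomy w i with h | h | h
      · exact absurd hij (hNC w i v j h hiv hvj hw.symm)
      · have hvi : G.Adj v i := h ▸ hw
        refine SimpleGraph.Adj.reachable (hG'adj v i hvi ?_)
        intro hEq
        rw [Sym2.eq_iff] at hEq
        rcases hEq with ⟨h1, h2⟩ | ⟨h1, h2⟩
        · exact absurd h2 hiltj.ne
        · exact absurd h1 hvj.ne
      · have hwj : w < j := lt_trans hwv hvj
        have hwv' : (w : ℕ) < M := by
          have := Fin.lt_def.mp hwv; omega
        have hrw : G'.Reachable w i := ih w.val hwv' w rfl h hwj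
        refine SimpleGraph.Reachable.trans ?_ hrw
        refine SimpleGraph.Adj.reachable (hG'adj v w hw ?_)
        intro hEq
        rw [Sym2.eq_iff] at hEq
        rcases hEq with ⟨h1, h2⟩ | ⟨h1, h2⟩
        · exact absurd h1 hiv.ne'
        · exact absurd h2 h.ne'
  -- the edge {i,j} is a bridge
  have hbridge : ¬ G'.Reachable i j := by
    have := (SimpleGraph.isAcyclic_iff_forall_adj_isBridge.mp hT.IsAcyclic) hij
    rw [SimpleGraph.isBridge_iff] at this
    exact this
  refine ⟨i, j, hiltj, hij, ?_, ?_⟩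
  · intro k hk hadj
    rcases hk with hk | hk
    · exact absurd (hiS k hadj) (not_lt.mpr hk.le)
    · exact absurd (hjmax k hadj) (not_le.mpr hk)
  · intro k hik hkj hadj
    apply hbridge
    have h1 : G'.Reachable k i := key k.val k rfl hik hkj
    have h2 : G'.Adj j k := by
      refine hG'adj j k hadj ?_
      intro hEq
      rw [Sym2.eq_iff] at hEq
      rcases hEq with ⟨h1', h2'⟩ | ⟨h1', h2'⟩
      · exact absurd h1' hiltj.ne'
      · exact absurd h2' hik.ne'
    exact h1.symm.trans h2.symm.reachable
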